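/- Every connected graph that contains no induced claw (K_{1,3}) and no induced paw is either an induced path, an induced cycle, or the complement of a (not necessarily perfect) matching. -/
import Mathlib

/-- The claw `K_{1,3}`: center `0`, leaves `1, 2, 3`. -/
def clawGraph : SimpleGraph (Fin 4) :=
  SimpleGraph.fromRel fun i j => ((i : ℕ), (j : ℕ)) ∈ [(0, 1), (0, 2), (0, 3)]

/-- The paw: the claw plus one edge (a triangle with a pendant vertex). -/
def pawGraph : SimpleGraph (Fin 4) :=
  SimpleGraph.fromRel fun i j => ((i : ℕ), (j : ℕ)) ∈ [(0, 1), (0, 2), (0, 3), (1, 2)]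

section Aux
open SimpleGraph

lemma no_claw {V : Type*} {G : SimpleGraph V} (hclaw : IsEmpty (clawGraph ↪g G)) {x a b c : V}
    (ha : G.Adj x a) (hb : G.Adj x b) (hc : G.Adj x c)
    (hab : ¬G.Adj a b) (hac : ¬G.Adj a c) (hbc : ¬G.Adj b c)
    (nab : a ≠ b) (nac : a ≠ c) (nbc : b ≠ c) : False := by
  apply hclaw.false
  have ha' := ha.symm; have hb' := hb.symm; have hc' := hc.symm
  have hab' : ¬G.Adj b a := fun h => hab h.symm
  have hac' : ¬G.Adj c a := fun h => hac h.symm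
  have hbc' : ¬G.Adj c b := fun h => hbc h.symm
  have nab' := nab.symm; have nac' := nac.symm; have nbc' := nbc.symm
  have nxa := ha.ne; have nxb := hb.ne; have nxc := hc.ne
  have nax := ha.ne'; have nbx := hb.ne'; have ncx := hc.ne'
  have hinj : Function.Injective ![x, a, b, c] := by
    intro i j h
    fin_cases i <;> fin_cases j <;> first | rfl | (simp_all; omega) | simp_all
  exact ⟨⟨![x, a, b, c], hinj⟩, by
    intro i j
    fin_cases i <;> fin_cases j <;>
      simp [clawGraph, G.irrefl] <;> norm_num [Fin.ext_iff] <;> tauto⟩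

lemma no_paw {V : Type*} {G : SimpleGraph V} (hpaw : IsEmpty (pawGraph ↪g G)) {x y z d : V}
    (hxy : G.Adj x y) (hxz : G.Adj x z) (hyz : G.Adj y z) (hxd : G.Adj x d)
    (hyd : ¬G.Adj y d) (hzd : ¬G.Adj z d) (nyd : y ≠ d) (nzd : z ≠ d) : False := by
  apply hpaw.false
  have h1 := hxy.symm; have h2 := hxz.symm; have h3 := hyz.symm; have h4 := hxd.symm
  have hyd' : ¬G.Adj d y := fun h => hyd h.symm
  have hzd' : ¬G.Adj d z := fun h => hzd h.symm
  have nyd' := nyd.symm; have nzd' := nzd.symm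
  have e1 := hxy.ne; have e2 := hxz.ne; have e3 := hyz.ne; have e4 := hxd.ne
  have e1' := hxy.ne'; have e2' := hxz.ne'; have e3' := hyz.ne'; have e4' := hxd.ne'
  have hinj : Function.Injective ![x, y, z, d] := by
    intro i j h
    fin_cases i <;> fin_cases j <;> first | rfl | (simp_all; omega) | simp_all
  exact ⟨⟨![x, y, z, d], hinj⟩, by
    intro i j
    fin_cases i <;> fin_cases j <;>
      simp [pawGraph, G.irrefl] <;> norm_num [Fin.ext_iff] <;> tauto⟩

section Tri
variable {V : Type*} {G : SimpleGraph V}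

/-- helper: if `w` is adjacent to `x` in triangle `x y z`, and paw-free, then
`w` is one of `y,z` or adjacent to a second triangle vertex. -/
lemma good_of_adj (hpawF : ∀ {x y z d : V}, G.Adj x y → G.Adj x z → G.Adj y z → G.Adj x d →
      ¬G.Adj y d → ¬G.Adj z d → y ≠ d → z ≠ d → False)
    {x y z w : V} (hxy : G.Adj x y) (hxz : G.Adj x z) (hyz : G.Adj y z)
    (h1 : G.Adj w x) : w = y ∨ w = z ∨ (G.Adj w y ∨ G.Adj w z) := by
  by_cases wy : w = y
  · exact Or.inl wy
  by_cases wz : w = z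
  · exact Or.inr (Or.inl wz)
  by_cases ay : G.Adj w y
  · exact Or.inr (Or.inr (Or.inl ay))
  by_cases az : G.Adj w z
  · exact Or.inr (Or.inr (Or.inr az))
  exact absurd (hpawF hxy hxz hyz h1.symm (fun h => ay h.symm) (fun h => az h.symm)
    (Ne.symm wy) (Ne.symm wz)) id

/-- `Good` predicate: v coincides with a triangle vertex or is adjacent to ≥ 2 of them. -/
def GoodT (G : SimpleGraph V) (x y z v : V) : Prop :=
  v = x ∨ v = y ∨ v = z ∨
    ((G.Adj v x ∧ G.Adj v y) ∨ (G.Adj v x ∧ G.Adj v z) ∨ (G.Adj v y ∧ G.Adj v z))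

lemma good_all (hconn : G.Connected)
    (hpawF : ∀ {x y z d : V}, G.Adj x y → G.Adj x z → G.Adj y z → G.Adj x d →
      ¬G.Adj y d → ¬G.Adj z d → y ≠ d → z ≠ d → False)
    {x y z : V} (hxy : G.Adj x y) (hxz : G.Adj x z) (hyz : G.Adj y z) (v : V) :
    GoodT G x y z v := by
  -- any vertex adjacent to one triangle vertex is good
  have A1 : ∀ w, G.Adj w x → GoodT G x y z w := by
    intro w h
    rcases good_of_adj hpawF hxy hxz hyz h with h' | h' | h' | h' <;>
      unfold GoodT <;> tauto
  have A2 : ∀ w, G.Adj w y → GoodT G x y z w := by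
    intro w h
    rcases good_of_adj hpawF hxy.symm hyz hxz h with h' | h' | h' | h' <;>
      unfold GoodT <;> tauto
  have A3 : ∀ w, G.Adj w z → GoodT G x y z w := by
    intro w h
    rcases good_of_adj hpawF hxz.symm hyz.symm hxy h with h' | h' | h' | h' <;>
      unfold GoodT <;> tauto
  -- good propagates along edges
  have step : ∀ u w, GoodT G x y z u → G.Adj u w → GoodT G x y z w := by
    intro u w hu hadj
    rcases hu with rfl | rfl | rfl | hu
    · exact A1 w hadj.symm
    · exact A2 w hadj.symm
    · exact A3 w hadj.symm
    · rcases hu with ⟨h1, h2⟩ | ⟨h1, h2⟩ | ⟨h1, h2⟩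
      · -- triangle u x y
        rcases good_of_adj hpawF h1 h2 hxy hadj.symm with rfl | rfl | h' | h'
        · left; rfl
        · right; left; rfl
        · exact A1 w h'
        · exact A2 w h'
      · rcases good_of_adj hpawF h1 h2 hxz hadj.symm with rfl | rfl | h' | h'
        · left; rfl
        · right; right; left; rfl
        · exact A1 w h'
        · exact A3 w h'
      · rcases good_of_adj hpawF h1 h2 hyz hadj.symm with rfl | rfl | h' | h'
        · right; left; rfl
        · right; right; left; rfl
        · exact A2 w h'
        · exact A3 w h'
  have walkP : ∀ (s t : V) (p : G.Walk s t), GoodT G x y z s → GoodT G x y z t := by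
    intro s t p
    induction p with
    | nil => exact id
    | cons h q ih => exact fun hs => ih (step _ _ hs h)
  obtain ⟨p⟩ := hconn x v
  exact walkP x v p (Or.inl rfl)

lemma matching_compl (hconn : G.Connected)
    (hclawF : ∀ {x a b c : V}, G.Adj x a → G.Adj x b → G.Adj x c →
      ¬G.Adj a b → ¬G.Adj a c → ¬G.Adj b c → a ≠ b → a ≠ c → b ≠ c → False)
    (hpawF : ∀ {x y z d : V}, G.Adj x y → G.Adj x z → G.Adj y z → G.Adj x d →
      ¬G.Adj y d → ¬G.Adj z d → y ≠ d → z ≠ d → False)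
    {a b c : V} (hab : G.Adj a b) (hac : G.Adj a c) (hbc : G.Adj b c) :
    ∀ v : V, {w : V | w ≠ v ∧ ¬ G.Adj v w}.Subsingleton := by
  -- every vertex is adjacent to two of any triangle (or equals one)
  -- Two: every vertex is adjacent to at least two of {a, b, c} "with itself allowed"
  have Two : ∀ v : V, (G.Adj v a ∧ G.Adj v b) ∨ (G.Adj v a ∧ G.Adj v c) ∨
      (G.Adj v b ∧ G.Adj v c) ∨ v = a ∨ v = b ∨ v = c := by
    intro v
    rcases good_all hconn hpawF hab hac hbc v with rfl | rfl | rfl | h <;> tauto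
  -- every edge lies in a triangle
  have edge_tri : ∀ u v : V, G.Adj u v → ∃ t, G.Adj u t ∧ G.Adj v t := by
    intro u v huv
    have hba := hab.symm; have hca := hac.symm; have hcb := hbc.symm
    rcases Two u with ⟨h1, h2⟩ | ⟨h1, h2⟩ | ⟨h1, h2⟩ | rfl | rfl | rfl <;>
      rcases Two v with ⟨g1, g2⟩ | ⟨g1, g2⟩ | ⟨g1, g2⟩ | rfl | rfl | rfl <;>
      first
        | (exact absurd huv (G.irrefl _))
        | (refine ⟨a, ?_, ?_⟩ <;> assumption)
        | (refine ⟨b, ?_, ?_⟩ <;> assumption)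
        | (refine ⟨c, ?_, ?_⟩ <;> assumption)
  -- nonadjacent vertices have the same neighbours
  have same_nbr : ∀ x y w : V, x ≠ y → ¬G.Adj x y → G.Adj x w → G.Adj y w := by
    intro x y w hne hna hxw
    obtain ⟨t, hxt, hwt⟩ := edge_tri x w hxw
    rcases good_all hconn hpawF hxw hxt hwt y with rfl | rfl | rfl | h
    · exact absurd rfl hne.symm
    · exact absurd hxw hna
    · exact absurd hxt hna
    · rcases h with ⟨h1, _⟩ | ⟨h1, _⟩ | ⟨h1, _⟩
      · exact absurd h1.symm hna
      · exact absurd h1.symm hna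
      · exact h1
  intro v w1 hw1 w2 hw2
  obtain ⟨hne1, hna1⟩ := hw1
  obtain ⟨hne2, hna2⟩ := hw2
  by_contra hne
  by_cases h12 : G.Adj w1 w2
  · exact hna2 (same_nbr w1 v w2 hne1 (fun h => hna1 h.symm) h12)
  · -- v, w1, w2 pairwise nonadjacent; v has a neighbour u
    have hu : ∃ u, G.Adj v u := by
      rcases Two v with ⟨h1, _⟩ | ⟨h1, _⟩ | ⟨h1, _⟩ | rfl | rfl | rfl
      exacts [⟨a, h1⟩, ⟨a, h1⟩, ⟨b, h1⟩, ⟨b, hab⟩, ⟨a, hab.symm⟩, ⟨a, hac.symm⟩]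
    obtain ⟨u, hvu⟩ := hu
    have h1u : G.Adj w1 u := same_nbr v w1 u (Ne.symm hne1) hna1 hvu
    have h2u : G.Adj w2 u := same_nbr v w2 u (Ne.symm hne2) hna2 hvu
    exact hclawF hvu.symm h1u.symm h2u.symm hna1 hna2 h12 hne1.symm hne2.symm hne

end Tri

lemma fin_sub_one_iff {n : ℕ} (hn : 1 ≤ n) (i j : Fin (n+1)) :
    (j - i).val = 1 ↔ (j.val = i.val + 1 ∨ (i.val = n ∧ j.val = 0)) := by
  have hi := i.isLt; have hj := j.isLt
  rw [Fin.sub_def]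
  simp only [Fin.val_mk]
  rcases le_or_gt i.val j.val with h | h
  · have e : n + 1 - i.val + j.val = (n + 1) + (j.val - i.val) := by omega
    simp only [e, Nat.add_mod_left]
    rw [Nat.mod_eq_of_lt (by omega)]
    omega
  · rw [Nat.mod_eq_of_lt (by omega)]
    omega

lemma getVert_inj {V : Type*} {G : SimpleGraph V} :
    ∀ {u v : V} (p : G.Walk u v), p.IsPath → ∀ i j : ℕ, i ≤ p.length → j ≤ p.length →
      p.getVert i = p.getVert j → i = j := by
  intro u v p
  induction p with
  | nil => intro _ i j hi hj _; simp [Walk.length_nil] at hi hj; omega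
  | cons h q ih =>
    intro hp i j hi hj heq
    rw [Walk.cons_isPath_iff] at hp
    rw [Walk.length_cons] at hi hj
    match i, j with
    | 0, 0 => rfl
    | 0, j+1 =>
      exfalso
      apply hp.2
      rw [Walk.mem_support_iff_exists_getVert]
      exact ⟨j, by simpa [Walk.getVert_zero, Walk.getVert_cons_succ] using heq.symm, by omega⟩
    | i+1, 0 =>
      exfalso
      apply hp.2
      rw [Walk.mem_support_iff_exists_getVert]
      exact ⟨i, by simpa [Walk.getVert_zero, Walk.getVert_cons_succ] using heq, by omega⟩
    | i+1, j+1 =>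
      have := ih hp.1 i j (by omega) (by omega)
        (by simpa [Walk.getVert_cons_succ] using heq)
      omega

lemma path_or_cycle {V : Type*} [Fintype V] {G : SimpleGraph V} (hconn : G.Connected)
    (hdeg : ∀ x a b c : V, G.Adj x a → G.Adj x b → G.Adj x c → a = b ∨ a = c ∨ b = c) :
    (∃ n, Nonempty (G ≃g pathGraph n)) ∨ (∃ n, Nonempty (G ≃g cycleGraph n)) := by
  classical
  obtain ⟨v0⟩ := hconn.nonempty
  let P : ℕ → Prop := fun n => ∃ (a b : V) (q : G.Walk a b), q.IsPath ∧ q.length = n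
  have hP0 : P 0 := ⟨v0, v0, Walk.nil, Walk.IsPath.nil, rfl⟩
  have hbound : ∀ n, P n → n ≤ Fintype.card V := by
    rintro n ⟨a, b, q, hq, rfl⟩
    have h1 : q.support.length ≤ Fintype.card V := hq.support_nodup.length_le_card
    rw [Walk.length_support] at h1; omega
  obtain ⟨u, v, p, hp, hlen⟩ : P (Nat.findGreatest P (Fintype.card V)) :=
    Nat.findGreatest_spec (Nat.zero_le _) hP0
  have hmax : ∀ (a b : V) (q : G.Walk a b), q.IsPath → q.length ≤ p.length := by
    intro a b q hq
    rw [hlen]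
    exact Nat.le_findGreatest (hbound _ ⟨a, b, q, hq, rfl⟩) ⟨a, b, q, hq, rfl⟩
  clear hlen hP0 hbound
  set N := p.length with hN
  have claim1 : ∀ w, G.Adj w u → w ∈ p.support := by
    intro w hw
    by_contra hws
    have := hmax w v (p.cons hw) (hp.cons hws)
    rw [Walk.length_cons] at this; omega
  have claim2 : ∀ w, G.Adj w v → w ∈ p.support := by
    intro w hw
    by_contra hws
    have hws' : w ∉ p.reverse.support := by
      rwa [Walk.support_reverse, List.mem_reverse]
    have := hmax w u (p.reverse.cons hw) (hp.reverse.cons hws')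
    rw [Walk.length_cons, Walk.length_reverse] at this; omega
  have memN : ∀ {i : ℕ}, i ≤ N → p.getVert i ∈ p.support := fun hi =>
    Walk.mem_support_iff_exists_getVert.2 ⟨_, rfl, hi⟩
  have span : ∀ x, x ∈ p.support := by
    intro x
    by_contra hx
    obtain ⟨wlk⟩ := hconn x u
    have cross : ∀ (s t : V) (w : G.Walk s t), s ∉ p.support → t ∈ p.support →
        ∃ a b, G.Adj a b ∧ a ∉ p.support ∧ b ∈ p.support := by
      intro s t w
      induction w with
      | nil => intro hs ht; exact absurd ht hs
      | @cons s m t h q ih =>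
        intro hs ht
        by_cases hm : m ∈ p.support
        · exact ⟨s, m, h, hs, hm⟩
        · exact ih hm ht
    obtain ⟨a, b, hab, ha, hb⟩ := cross x u wlk hx p.start_mem_support
    obtain ⟨i, hib, hi⟩ := Walk.mem_support_iff_exists_getVert.1 hb
    by_cases hi0 : i = 0
    · subst hi0
      rw [Walk.getVert_zero] at hib
      subst hib
      exact ha (claim1 a hab)
    by_cases hiN : i = N
    · subst hiN
      rw [Walk.getVert_length] at hib
      subst hib
      exact ha (claim2 a hab)
    have h1 : G.Adj (p.getVert (i-1)) (p.getVert i) := by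
      have := p.adj_getVert_succ (i := i-1) (by omega)
      rwa [show i - 1 + 1 = i by omega] at this
    have h2 : G.Adj (p.getVert i) (p.getVert (i+1)) := p.adj_getVert_succ (by omega)
    have hba : G.Adj (p.getVert i) a := by rw [hib]; exact hab.symm
    rcases hdeg (p.getVert i) a (p.getVert (i-1)) (p.getVert (i+1)) hba h1.symm h2 with
      h | h | h
    · exact ha (by rw [h]; exact memN (by omega))
    · exact ha (by rw [h]; exact memN (by omega))
    · have := getVert_inj p hp (i-1) (i+1) (by omega) (by omega) h; omega
  have chord : ∀ i j : ℕ, i < j → j ≤ N → G.Adj (p.getVert i) (p.getVert j) →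
      j = i + 1 ∨ (i = 0 ∧ j = N) := by
    intro i j hij hj hadj
    by_contra hcon
    push_neg at hcon
    obtain ⟨h1, h2⟩ := hcon
    by_cases hi0 : i = 0
    · subst hi0
      have hjN : j ≠ N := h2 rfl
      have hA : G.Adj (p.getVert j) (p.getVert (j-1)) := by
        have := p.adj_getVert_succ (i := j-1) (by omega)
        rw [show j - 1 + 1 = j by omega] at this
        exact this.symm
      have hB : G.Adj (p.getVert j) (p.getVert (j+1)) := p.adj_getVert_succ (by omega)
      rcases hdeg (p.getVert j) (p.getVert (j-1)) (p.getVert (j+1)) (p.getVert 0)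
        hA hB hadj.symm with h | h | h
      · have := getVert_inj p hp (j-1) (j+1) (by omega) (by omega) h; omega
      · have := getVert_inj p hp (j-1) 0 (by omega) (by omega) h; omega
      · have := getVert_inj p hp (j+1) 0 (by omega) (by omega) h; omega
    · have hA : G.Adj (p.getVert i) (p.getVert (i-1)) := by
        have := p.adj_getVert_succ (i := i-1) (by omega)
        rw [show i - 1 + 1 = i by omega] at this
        exact this.symm
      have hB : G.Adj (p.getVert i) (p.getVert (i+1)) := p.adj_getVert_succ (by omega)
      rcases hdeg (p.getVert i) (p.getVert (i-1)) (p.getVert (i+1)) (p.getVert j)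
        hA hB hadj with h | h | h
      · have := getVert_inj p hp (i-1) (i+1) (by omega) (by omega) h; omega
      · have := getVert_inj p hp (i-1) j (by omega) (by omega) h; omega
      · have := getVert_inj p hp (i+1) j (by omega) (by omega) h; omega
  let f : Fin (N+1) → V := fun i => p.getVert i.val
  have hu0 : f ⟨0, by omega⟩ = u := Walk.getVert_zero p
  have hfbij : Function.Bijective f := by
    constructor
    · intro i j hij
      exact Fin.ext (getVert_inj p hp i.val j.val (Nat.lt_succ_iff.mp i.isLt)
        (Nat.lt_succ_iff.mp j.isLt) hij)
    · intro y
      obtain ⟨n, hgv, hn⟩ := Walk.mem_support_iff_exists_getVert.1 (span y)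
      exact ⟨⟨n, by omega⟩, hgv⟩
  let e := Equiv.ofBijective f hfbij
  have hfu : ∀ i : Fin (N+1), i.val = 0 → f i = u := by
    intro i h
    show p.getVert i.val = u
    rw [h, Walk.getVert_zero]
  have hfv : ∀ i : Fin (N+1), i.val = N → f i = v := by
    intro i h
    show p.getVert i.val = v
    rw [h]; exact Walk.getVert_length p
  have adj_iff : ∀ i j : Fin (N+1), G.Adj (f i) (f j) ↔
      ((j.val = i.val + 1 ∨ i.val = j.val + 1) ∨
        ((i.val = 0 ∧ j.val = N ∨ j.val = 0 ∧ i.val = N) ∧ G.Adj u v)) := by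
    intro i j
    constructor
    · intro h
      have hne : i.val ≠ j.val := fun hh => h.ne (congrArg f (Fin.ext hh))
      rcases Nat.lt_or_ge i.val j.val with hlt | hge
      · rcases chord i.val j.val hlt (Nat.lt_succ_iff.mp j.isLt) h with h' | h'
        · exact Or.inl (Or.inl h')
        · refine Or.inr ⟨Or.inl h', ?_⟩
          rw [← hfu i h'.1, ← hfv j h'.2]; exact h
      · have hlt : j.val < i.val := by omega
        rcases chord j.val i.val hlt (Nat.lt_succ_iff.mp i.isLt) h.symm with h' | h'
        · exact Or.inl (Or.inr h')
        · refine Or.inr ⟨Or.inr h', ?_⟩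
          rw [← hfu j h'.1, ← hfv i h'.2]; exact h.symm
    · rintro ((h | h) | ⟨(⟨hi0, hjN⟩ | ⟨hj0, hiN⟩), huv⟩)
      · have := p.adj_getVert_succ (i := i.val) (by omega)
        show G.Adj (p.getVert i.val) (p.getVert j.val)
        rw [h]; exact this
      · have := p.adj_getVert_succ (i := j.val) (by omega)
        show G.Adj (p.getVert i.val) (p.getVert j.val)
        rw [h]; exact this.symm
      · rw [hfu i hi0, hfv j hjN]; exact huv
      · rw [hfu j hj0, hfv i hiN]; exact huv.symm
  by_cases huv : G.Adj u v
  · right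
    have hN1 : 1 ≤ N := by
      rcases Nat.eq_zero_or_pos N with h0 | h0
      · exfalso
        have huv' : u = v := p.eq_of_length_eq_zero (by rw [← hN]; exact h0)
        exact G.irrefl (huv' ▸ huv)
      · omega
    refine ⟨N+1, ⟨?_⟩⟩
    refine (RelIso.symm ⟨e, ?_⟩)
    intro i j
    rw [show (e i) = f i from rfl, show (e j) = f j from rfl, adj_iff i j, cycleGraph_adj',
      fin_sub_one_iff hN1 j i, fin_sub_one_iff hN1 i j]
    constructor
    · rintro ((h | h) | ⟨(⟨h1, h2⟩ | ⟨h1, h2⟩), _⟩) <;> tauto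
    · rintro ((h | ⟨h1, h2⟩) | (h | ⟨h1, h2⟩)) <;> tauto
  · left
    refine ⟨N+1, ⟨?_⟩⟩
    refine (RelIso.symm ⟨e, ?_⟩)
    intro i j
    rw [show (e i) = f i from rfl, show (e j) = f j from rfl, adj_iff i j, pathGraph_adj]
    constructor
    · rintro ((h | h) | ⟨_, hA⟩)
      · exact Or.inl h.symm
      · exact Or.inr h.symm
      · exact absurd hA huv
    · rintro (h | h)
      · exact Or.inl (Or.inl h.symm)
      · exact Or.inl (Or.inr h.symm)

end Aux

/-- Lemma 5.9: every connected {claw, paw}-free graph is a path, a cycle, or the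
complement of a (not necessarily perfect) matching, i.e. a graph in which every
vertex has at most one non-neighbor. -/
theorem claw_paw_free_structure {V : Type*} [Fintype V] (G : SimpleGraph V)
    (hconn : G.Connected)
    (hclaw : IsEmpty (clawGraph ↪g G)) (hpaw : IsEmpty (pawGraph ↪g G)) :
    (∃ n, Nonempty (G ≃g SimpleGraph.pathGraph n)) ∨
    (∃ n, Nonempty (G ≃g SimpleGraph.cycleGraph n)) ∨
    (∀ v : V, {w : V | w ≠ v ∧ ¬ G.Adj v w}.Subsingleton) := by
  have hclawF : ∀ {x a b c : V}, G.Adj x a → G.Adj x b → G.Adj x c →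
      ¬G.Adj a b → ¬G.Adj a c → ¬G.Adj b c → a ≠ b → a ≠ c → b ≠ c → False :=
    fun ha hb hc hab hac hbc nab nac nbc =>
      no_claw hclaw ha hb hc hab hac hbc nab nac nbc
  have hpawF : ∀ {x y z d : V}, G.Adj x y → G.Adj x z → G.Adj y z → G.Adj x d →
      ¬G.Adj y d → ¬G.Adj z d → y ≠ d → z ≠ d → False :=
    fun hxy hxz hyz hxd hyd hzd nyd nzd =>
      no_paw hpaw hxy hxz hyz hxd hyd hzd nyd nzd
  by_cases htri : ∃ a b c : V, G.Adj a b ∧ G.Adj a c ∧ G.Adj b c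
  · obtain ⟨a, b, c, hab, hac, hbc⟩ := htri
    exact Or.inr (Or.inr (matching_compl hconn hclawF hpawF hab hac hbc))
  · have hdeg : ∀ x a b c : V, G.Adj x a → G.Adj x b → G.Adj x c →
        a = b ∨ a = c ∨ b = c := by
      intro x a b c ha hb hc
      by_contra hcon
      push_neg at hcon
      obtain ⟨nab, nac, nbc⟩ := hcon
      have hab : ¬G.Adj a b := fun h => htri ⟨x, a, b, ha, hb, h⟩
      have hac : ¬G.Adj a c := fun h => htri ⟨x, a, c, ha, hc, h⟩
      have hbc : ¬G.Adj b c := fun h => htri ⟨x, b, c, hb, hc, h⟩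
      exact hclawF ha hb hc hab hac hbc nab nac nbc
    rcases path_or_cycle hconn hdeg with h | h
    · exact Or.inl h
    · exact Or.inr (Or.inl h)
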